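/- Compact embedding of M^{p,q} into L^p: Let 1 ≤ p, q < ∞, T > 0, and let X₁ ⊂ X₂ ⊂ X₃ be real Banach spaces such that X₁ is reflexive, the embedding X₁ ⊂ X₂ is compact, and the embedding X₂ ⊂ X₃ is continuous. Then every sequence (xₙ) of functions [0,T] → X₁ with ‖xₙ‖_{L^p(0,T;X₁)} + ‖xₙ‖_{BV^q(0,T;X₃)} uniformly bounded has a subsequence that converges strongly in L^p(0,T;X₂). -/

import Mathlib

open Filter Topology MeasureTheory Set
open scoped ENNReal

noncomputable section

/-- A map is compact if it maps bounded sets to relatively compact sets. -/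
def MapsBoundedToRelCompact {X Y : Type*} [NormedAddCommGroup X] [NormedAddCommGroup Y]
    (f : X → Y) : Prop :=
  ∀ s : Set X, Bornology.IsBounded s → IsCompact (closure (f '' s))

/-- The set of all partition sums `Σ_i ‖x(tᵢ₊₁) − x(tᵢ)‖^q` over finite partitions
`0 = t₀ < t₁ < … < t_m = T` of `[0,T]` (equivalently, over finite families of disjoint open
intervals whose closures cover `[0,T]`); the `BV^q(0,T;X)` seminorm of `x` is the `q`-th root
of the supremum of this set. -/
def bvPowSums {X : Type*} [NormedAddCommGroup X] (q T : ℝ) (x : ℝ → X) : Set ℝ :=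
  { r : ℝ | ∃ (m : ℕ) (t : ℕ → ℝ), 0 < m ∧ t 0 = 0 ∧ t m = T ∧
      (∀ i < m, t i < t (i + 1)) ∧
      r = ∑ i ∈ Finset.range m, ‖x (t (i + 1)) - x (t i)‖ ^ q }

section AuxLemmas

lemma mpq_aux_rpow_abs (C q : ℝ) (hq : 1 ≤ q) : C ^ q ≤ (|C| + 1) ^ q := by
  have hq0 : 0 < q := lt_of_lt_of_le zero_lt_one hq
  rcases le_or_gt 0 C with h | h
  · exact Real.rpow_le_rpow h (by cases abs_cases C <;> linarith) hq0.le
  · have h1 : C ^ q = Real.exp (Real.log C * q) * Real.cos (q * Real.pi) :=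
      Real.rpow_def_of_neg h q
    have h2 : Real.exp (Real.log C * q) = |C| ^ q := by
      rw [Real.rpow_def_of_pos (abs_pos.mpr h.ne), abs_of_neg h, Real.log_neg_eq_log]
    have h3 : C ^ q ≤ |C| ^ q := by
      rw [h1, ← h2]
      nlinarith [Real.exp_pos (Real.log C * q), Real.neg_one_le_cos (q * Real.pi),
        Real.cos_le_one (q * Real.pi)]
    exact h3.trans (Real.rpow_le_rpow (abs_nonneg C) (by linarith) hq0.le)

lemma mpq_aux_real_le_of_rpow_le {a b q : ℝ} (ha : 0 ≤ a) (hb : 0 ≤ b) (hq : 0 < q)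
    (h : a ^ q ≤ b ^ q) : a ≤ b := by
  by_contra hab
  push_neg at hab
  exact absurd h (not_le.mpr (Real.rpow_lt_rpow hb hab hq))

lemma mpq_aux_ennreal_add_rpow (A B : ℝ≥0∞) {p : ℝ} (hp : 0 ≤ p) :
    (A + B) ^ p ≤ 2 ^ p * (A ^ p + B ^ p) := by
  have h1 : A + B ≤ 2 * (A ⊔ B) := by
    rw [two_mul]
    exact add_le_add le_sup_left le_sup_right
  calc (A + B) ^ p ≤ (2 * (A ⊔ B)) ^ p := ENNReal.rpow_le_rpow h1 hp
    _ = 2 ^ p * (A ⊔ B) ^ p := ENNReal.mul_rpow_of_nonneg _ _ hp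
    _ ≤ 2 ^ p * (A ^ p + B ^ p) := by
        gcongr
        rcases le_total A B with h | h
        · rw [sup_eq_right.mpr h]; exact le_add_self
        · rw [sup_eq_left.mpr h]; exact le_self_add

end AuxLemmas
section BV
lemma bv_pow_nonneg {X : Type*} [NormedAddCommGroup X] {q T C : ℝ} (hT : 0 < T)
    {h : ℝ → X} (hBV : ∀ r ∈ bvPowSums q T h, r ≤ C ^ q) : 0 ≤ C ^ q := by
  have hmem : (‖h ((fun i : ℕ => if i = 0 then 0 else T) 1) - h 0‖ ^ q) ∈ bvPowSums q T h := by
    refine ⟨1, fun i => if i = 0 then 0 else T, one_pos, by simp, by simp, ?_, by simp⟩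
    intro i hi
    interval_cases i
    simpa using hT
  exact le_trans (Real.rpow_nonneg (norm_nonneg _) q) (hBV _ hmem)

lemma pairs_bv {X : Type*} [NormedAddCommGroup X] {q T C : ℝ} (hT : 0 < T)
    {h : ℝ → X} (hBV : ∀ r ∈ bvPowSums q T h, r ≤ C ^ q)
    (r : ℕ) (s t : ℕ → ℝ)
    (h1 : ∀ l, l < r → 0 < s l) (h2 : ∀ l, l < r → s l < t l)
    (h3 : ∀ l, l + 1 < r → t l < s (l + 1)) (h4 : ∀ l, l < r → t l ≤ T) :
    ∑ l ∈ Finset.range r, ‖h (t l) - h (s l)‖ ^ q ≤ C ^ q := by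
  rcases Nat.eq_zero_or_pos r with hr | hr
  · subst hr; simpa using bv_pow_nonneg hT hBV
  set u : ℕ → ℝ := fun i =>
    if i = 0 then 0 else if 2 * r + 1 ≤ i then T
    else if i % 2 = 1 then s ((i - 1) / 2) else t ((i - 1) / 2) with hu
  have hu0 : u 0 = 0 := by simp [hu]
  have hu_odd : ∀ l, l < r → u (2 * l + 1) = s l := by
    intro l hl
    simp only [hu]
    rw [if_neg (by omega), if_neg (by omega), if_pos (by omega)]
    congr 1; omega
  have hu_even : ∀ l, l < r → u (2 * l + 2) = t l := by
    intro l hl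
    simp only [hu]
    rw [if_neg (by omega), if_neg (by omega), if_neg (by omega)]
    congr 1; omega
  have hu_top : ∀ i, 2 * r + 1 ≤ i → u i = T := by
    intro i hi
    simp only [hu]
    rw [if_neg (by omega), if_pos hi]
  -- choose m
  set m : ℕ := if t (r - 1) = T then 2 * r else 2 * r + 1 with hm
  have hm0 : 0 < m := by rcases ite_eq_or_eq (t (r-1) = T) (2*r) (2*r+1) with hh | hh <;> omega
  have humT : u m = T := by
    by_cases hc : t (r - 1) = T
    · rw [hm, if_pos hc]
      have := hu_even (r - 1) (by omega)
      have he : 2 * (r - 1) + 2 = 2 * r := by omega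
      rw [he] at this
      rw [this, hc]
    · rw [hm, if_neg hc]; exact hu_top _ le_rfl
  have hstrict : ∀ i, i < m → u i < u (i + 1) := by
    intro i hi
    have him : m ≤ 2 * r + 1 := by rcases ite_eq_or_eq (t (r-1) = T) (2*r) (2*r+1) with hh | hh <;> omega
    rcases Nat.eq_zero_or_pos i with h0 | h0
    · subst h0
      rw [hu0]
      have : (1 : ℕ) = 2 * 0 + 1 := by omega
      rw [this, hu_odd 0 hr]
      exact h1 0 hr
    rcases Nat.even_or_odd i with ⟨l, hl⟩ | ⟨l, hl⟩
    · -- i = 2l even, ≥ 2, so i = 2(l-1)+2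
      have hl1 : i = 2 * (l - 1) + 2 := by omega
      have hlr : l - 1 < r := by omega
      rw [hl1, hu_even (l - 1) hlr]
      by_cases hc : l < r
      · have : 2 * (l - 1) + 2 + 1 = 2 * l + 1 := by omega
        rw [this, hu_odd l hc]
        have := h3 (l - 1) (by omega)
        have hll : l - 1 + 1 = l := by omega
        rwa [hll] at this
      · -- l = r, i = 2r, must be in case m = 2r+1, i.e. t (r-1) < T
        have hlr' : l = r := by omega
        have hcase : ¬ t (r - 1) = T := by
          intro hh
          rw [hm, if_pos hh] at hi
          omega
        have : 2 * (l - 1) + 2 + 1 = 2 * r + 1 := by omega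
        rw [this, hu_top _ le_rfl]
        have : l - 1 = r - 1 := by omega
        rw [this]
        exact lt_of_le_of_ne (h4 (r - 1) (by omega)) hcase
    · -- i = 2l+1 odd
      have hlr : l < r := by omega
      rw [hl, hu_odd l hlr]
      have : 2 * l + 1 + 1 = 2 * l + 2 := by omega
      rw [this, hu_even l hlr]
      exact h2 l hlr
  have hmemS : (∑ i ∈ Finset.range m, ‖h (u (i + 1)) - h (u i)‖ ^ q) ∈ bvPowSums q T h :=
    ⟨m, u, hm0, hu0, humT, hstrict, rfl⟩
  have hS := hBV _ hmemS
  refine le_trans ?_ hS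
  have hsum : ∑ l ∈ Finset.range r, ‖h (t l) - h (s l)‖ ^ q
      = ∑ i ∈ (Finset.range r).image (fun l => 2 * l + 1), ‖h (u (i + 1)) - h (u i)‖ ^ q := by
    rw [Finset.sum_image (by intro a _ b _ hab; simp only at hab; omega)]
    apply Finset.sum_congr rfl
    intro l hl
    have hlr := Finset.mem_range.mp hl
    rw [show 2 * l + 1 + 1 = 2 * l + 2 by omega, hu_even l hlr, hu_odd l hlr]
  rw [hsum]
  apply Finset.sum_le_sum_of_subset_of_nonneg
  · intro i hi
    simp only [Finset.mem_image, Finset.mem_range] at hi ⊢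
    obtain ⟨l, hl, rfl⟩ := hi
    have : ¬ t (r-1) = T ∨ t (r-1) = T := by tauto
    rcases ite_eq_or_eq (t (r-1) = T) (2*r) (2*r+1) with hh | hh <;> omega
  · intro i _ _
    positivity
end BV
section Part
variable {E : Type*} [NormedAddCommGroup E]
lemma exists_idx {T : ℝ} (hT : 0 < T) {N : ℕ} (hN : 0 < N) {t : ℝ} (ht : t ∈ Ioc 0 T) :
    ∃ j, j < N ∧ t ∈ Ioc (T * j / N) (T * (j + 1) / N) := by
  obtain ⟨ht0, htT⟩ := ht
  have hN' : (0:ℝ) < N := Nat.cast_pos.mpr hN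
  set a : ℝ := t * N / T with ha
  have ha0 : 0 < a := by positivity
  set k : ℕ := ⌈a⌉₊ with hk
  have hk1 : 1 ≤ k := Nat.one_le_iff_ne_zero.mpr (by positivity)
  have hak : a ≤ k := Nat.le_ceil a
  have hka : (k : ℝ) < a + 1 := Nat.ceil_lt_add_one ha0.le
  have hkN : k ≤ N := Nat.ceil_le.mpr (by
    rw [ha, div_le_iff₀ hT]
    nlinarith)
  refine ⟨k - 1, by omega, ?_, ?_⟩
  · have hcast : ((k - 1 : ℕ) : ℝ) = (k : ℝ) - 1 := by
      rw [Nat.cast_sub hk1]; norm_num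
    rw [hcast, div_lt_iff₀ hN']
    have : T * a = t * N := by rw [ha]; field_simp
    nlinarith
  · have hcast : ((k - 1 : ℕ) : ℝ) + 1 = (k : ℝ) := by
      rw [Nat.cast_sub hk1]; norm_num
    rw [hcast, le_div_iff₀ hN']
    have : t * N = T * a := by rw [ha]; field_simp
    nlinarith

lemma idx_unique {T : ℝ} (hT : 0 < T) {N : ℕ} {t : ℝ} {j j' : ℕ}
    (hj : t ∈ Ioc (T * j / N) (T * (j + 1) / N)) (hj' : t ∈ Ioc (T * j' / N) (T * (j' + 1) / N)) :
    j = j' := by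
  by_contra hne
  have hN' : (0:ℝ) < N := by
    rcases Nat.eq_zero_or_pos N with h0 | h0
    · subst h0; simp at hj
    · exact_mod_cast h0
  rcases lt_or_gt_of_ne hne with hlt | hlt
  · have : T * (j + 1) / N ≤ T * j' / N := by
      gcongr
      exact_mod_cast hlt
    linarith [hj.2, hj'.1]
  · have : T * (j' + 1) / N ≤ T * j / N := by
      gcongr
      exact_mod_cast hlt
    linarith [hj.1, hj'.2]

/-- step function -/
noncomputable def stepFn (T : ℝ) (N : ℕ) (w : ℕ → E) : ℝ → E :=
  fun t => ∑ j ∈ Finset.range N, (Ioc (T * j / N) (T * (j + 1) / N)).indicator (fun _ => w j) t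

lemma stepFn_sm (T : ℝ) (N : ℕ) (w : ℕ → E) : StronglyMeasurable (stepFn T N w) :=
  Finset.stronglyMeasurable_fun_sum _ fun j _ =>
    stronglyMeasurable_const.indicator measurableSet_Ioc

lemma stepFn_apply {T : ℝ} (hT : 0 < T) {N : ℕ} (w : ℕ → E) {t : ℝ} {j₀ : ℕ} (hj₀ : j₀ < N)
    (htj : t ∈ Ioc (T * j₀ / N) (T * (j₀ + 1) / N)) : stepFn T N w t = w j₀ := by
  rw [stepFn, Finset.sum_eq_single_of_mem j₀ (Finset.mem_range.mpr hj₀)]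
  · exact indicator_of_mem htj _
  · intro j _ hjne
    apply indicator_of_notMem
    intro hmem
    exact hjne (idx_unique hT hmem htj)

lemma stepFn_eLpNorm_le {p T : ℝ} (hp : 1 ≤ p) (hT : 0 < T) {N : ℕ} (hN : 0 < N) (w : ℕ → E) :
    eLpNorm (stepFn T N w) (ENNReal.ofReal p) (volume.restrict (Ioc (0:ℝ) T)) ≤
      (∑ j ∈ Finset.range N, ENNReal.ofReal (T / N) * ENNReal.ofReal ‖w j‖ ^ p) ^ (1 / p) := by
  have hp0 : 0 < p := lt_of_lt_of_le zero_lt_one hp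
  have hpne : ENNReal.ofReal p ≠ 0 := by simp [hp0]
  have hptop : ENNReal.ofReal p ≠ ∞ := ENNReal.ofReal_ne_top
  rw [eLpNorm_eq_lintegral_rpow_enorm_toReal hpne hptop, ENNReal.toReal_ofReal hp0.le]
  apply ENNReal.rpow_le_rpow _ (by positivity)
  have hbound : ∫⁻ t, (‖stepFn T N w t‖₊ : ℝ≥0∞) ^ p ∂(volume.restrict (Ioc (0:ℝ) T)) ≤
      ∫⁻ t, (∑ j ∈ Finset.range N,
        (Ioc (T * j / N) (T * (j + 1) / N)).indicator
          (fun _ => ENNReal.ofReal ‖w j‖ ^ p) t) ∂(volume.restrict (Ioc (0:ℝ) T)) := by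
    apply lintegral_mono_ae
    rw [ae_restrict_iff' measurableSet_Ioc]
    apply ae_of_all
    intro t ht
    obtain ⟨j₀, hj₀, htj⟩ := exists_idx hT hN ht
    rw [stepFn_apply hT w hj₀ htj]
    calc (‖w j₀‖₊ : ℝ≥0∞) ^ p
        = (Ioc (T * j₀ / N) (T * (j₀ + 1) / N)).indicator
            (fun _ => ENNReal.ofReal ‖w j₀‖ ^ p) t := by
          rw [indicator_of_mem htj, ofReal_norm, enorm_eq_nnnorm]
      _ ≤ _ := Finset.single_le_sum (f := fun (j : ℕ) => (Ioc (T * (j:ℝ) / N) (T * ((j:ℝ) + 1) / N)).indicator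
            (fun _ => ENNReal.ofReal ‖w j‖ ^ p) t) (fun j _ => zero_le)
            (Finset.mem_range.mpr hj₀)
  refine hbound.trans ?_
  rw [lintegral_finset_sum _ (fun j _ => Measurable.indicator measurable_const measurableSet_Ioc)]
  apply Finset.sum_le_sum
  intro j _
  rw [lintegral_indicator measurableSet_Ioc, setLIntegral_const]
  rw [Measure.restrict_apply measurableSet_Ioc]
  calc ENNReal.ofReal ‖w j‖ ^ p * volume (Ioc (T * j / N) (T * (j + 1) / N) ∩ Ioc 0 T)
      ≤ ENNReal.ofReal ‖w j‖ ^ p * volume (Ioc (T * j / N) (T * (j + 1) / N)) := by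
        gcongr
        exact inter_subset_left
    _ ≤ ENNReal.ofReal (T / N) * ENNReal.ofReal ‖w j‖ ^ p := by
        rw [Real.volume_Ioc, mul_comm]
        gcongr
        have hN' : (0:ℝ) < N := Nat.cast_pos.mpr hN
        have he : T * (↑j + 1) / ↑N - T * ↑j / ↑N = T / ↑N := by field_simp; ring
        exact le_of_eq he
lemma stepFn_memℒp {p T : ℝ} (hp : 1 ≤ p) (hT : 0 < T) {N : ℕ} (hN : 0 < N) (w : ℕ → E) :
    MemLp (stepFn T N w) (ENNReal.ofReal p) (volume.restrict (Ioc (0:ℝ) T)) := by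
  refine ⟨(stepFn_sm T N w).aestronglyMeasurable, ?_⟩
  refine lt_of_le_of_lt (stepFn_eLpNorm_le hp hT hN w) ?_
  apply ENNReal.rpow_lt_top_of_nonneg (by positivity)
  apply ne_of_lt
  apply lt_of_le_of_lt (Finset.sum_le_sum (fun j _ => le_refl _))
  apply ENNReal.sum_lt_top.mpr
  intro j _
  exact ENNReal.mul_lt_top ENNReal.ofReal_lt_top
    (ENNReal.rpow_lt_top_of_nonneg (by positivity) ENNReal.ofReal_ne_top)

lemma stepFn_sub (T : ℝ) (N : ℕ) (w w' : ℕ → E) (t : ℝ) :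
    stepFn T N w t - stepFn T N w' t = stepFn T N (fun j => w j - w' j) t := by
  rw [stepFn, stepFn, stepFn, ← Finset.sum_sub_distrib]
  apply Finset.sum_congr rfl
  intro j _
  by_cases h : t ∈ Ioc (T * j / N) (T * (j + 1) / N) <;>
    simp [Set.indicator_apply, h]
end Part
lemma ehrling {X₁ X₂ X₃ : Type*}
    [NormedAddCommGroup X₁] [NormedSpace ℝ X₁]
    [NormedAddCommGroup X₂] [NormedSpace ℝ X₂]
    [NormedAddCommGroup X₃] [NormedSpace ℝ X₃]
    (e₁₂ : X₁ →L[ℝ] X₂) (hcpt : MapsBoundedToRelCompact e₁₂)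
    (e₂₃ : X₂ →L[ℝ] X₃) (hinj : Function.Injective e₂₃)
    (η : ℝ) (hη : 0 < η) :
    ∃ Λ : ℝ, 1 ≤ Λ ∧ ∀ v : X₁, ‖e₁₂ v‖ ≤ η * ‖v‖ + Λ * ‖e₂₃ (e₁₂ v)‖ := by
  by_contra hcon
  push_neg at hcon
  have hex : ∀ k : ℕ, ∃ v : X₁, ‖v‖ = 1 ∧ η + (k + 1) * ‖e₂₃ (e₁₂ v)‖ < ‖e₁₂ v‖ := by
    intro k
    obtain ⟨v, hv⟩ := hcon ((k : ℝ) + 1) (by have := Nat.cast_nonneg (α := ℝ) k; linarith)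
    have hv0 : v ≠ 0 := by
      intro h0
      rw [h0] at hv
      simp at hv
    refine ⟨‖v‖⁻¹ • v, ?_, ?_⟩
    · rw [norm_smul, norm_inv, norm_norm, inv_mul_cancel₀ (norm_ne_zero_iff.mpr hv0)]
    · have hvpos : 0 < ‖v‖ := norm_pos_iff.mpr hv0
      have hc : 0 < ‖v‖⁻¹ := inv_pos.mpr hvpos
      have h1 : ‖e₁₂ (‖v‖⁻¹ • v)‖ = ‖v‖⁻¹ * ‖e₁₂ v‖ := by
        rw [e₁₂.map_smul, norm_smul, Real.norm_eq_abs, abs_of_pos hc]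
      have h2 : ‖e₂₃ (e₁₂ (‖v‖⁻¹ • v))‖ = ‖v‖⁻¹ * ‖e₂₃ (e₁₂ v)‖ := by
        rw [e₁₂.map_smul, e₂₃.map_smul, norm_smul, Real.norm_eq_abs, abs_of_pos hc]
      rw [h1, h2]
      have hmul := mul_lt_mul_of_pos_left hv hc
      have hone : ‖v‖⁻¹ * ‖v‖ = 1 := inv_mul_cancel₀ hvpos.ne'
      nlinarith [hmul, hone]
  choose v hv1 hv2 using hex
  have hball : ∀ k, e₁₂ (v k) ∈ closure (e₁₂ '' Metric.closedBall 0 1) := fun k =>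
    subset_closure ⟨v k, by simp [Metric.mem_closedBall, dist_zero_right, (hv1 k).le], rfl⟩
  obtain ⟨z, _, φ, hφ, hz⟩ := (hcpt _ Metric.isBounded_closedBall).tendsto_subseq hball
  have h3 : Tendsto (fun k => e₂₃ (e₁₂ (v (φ k)))) atTop (𝓝 (e₂₃ z)) :=
    (e₂₃.continuous.tendsto z).comp hz
  have hsmall : Tendsto (fun k => ‖e₂₃ (e₁₂ (v (φ k)))‖) atTop (𝓝 0) := by
    have hb : ∀ k, ‖e₂₃ (e₁₂ (v (φ k)))‖ ≤ ‖e₁₂‖ / (φ k + 1) := by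
      intro k
      have h2 := hv2 (φ k)
      have hle : ‖e₁₂ (v (φ k))‖ ≤ ‖e₁₂‖ := by
        calc ‖e₁₂ (v (φ k))‖ ≤ ‖e₁₂‖ * ‖v (φ k)‖ := e₁₂.le_opNorm _
          _ = ‖e₁₂‖ := by rw [hv1]; ring
      rw [le_div_iff₀ (by positivity)]
      nlinarith [norm_nonneg (e₂₃ (e₁₂ (v (φ k))))]
    have h0 : Tendsto (fun k => ‖e₁₂‖ / ((φ k : ℝ) + 1)) atTop (𝓝 0) := by
      apply Tendsto.div_atTop tendsto_const_nhds
      apply tendsto_atTop_add_const_right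
      exact tendsto_natCast_atTop_atTop.comp hφ.tendsto_atTop
    exact squeeze_zero (fun k => norm_nonneg _) hb h0
  have hz3 : e₂₃ z = 0 := by
    have := tendsto_nhds_unique h3 ((tendsto_zero_iff_norm_tendsto_zero).mpr hsmall)
    exact this
  have hz0 : z = 0 := hinj (by rw [hz3, map_zero])
  have hlb : ∀ k, η ≤ ‖e₁₂ (v (φ k))‖ := fun k =>
    le_trans (le_add_of_nonneg_right (by positivity)) (hv2 (φ k)).le
  have : η ≤ ‖z‖ := le_of_tendsto_of_tendsto' tendsto_const_nhds (hz.norm) hlb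
  rw [hz0, norm_zero] at this
  linarith
set_option maxHeartbeats 3200000 in
/-- **Compact embedding of `M^{p,q}(0,T;X₁,X₃)` into `L^p(0,T;X₂)`.** Let `1 ≤ p, q < ∞`,
`T > 0` and `X₁ ⊂ X₂ ⊂ X₃` real Banach spaces with `X₁` reflexive, the embedding `X₁ ⊂ X₂`
compact and the embedding `X₂ ⊂ X₃` continuous. Then every sequence `(xₙ)` of functions
`[0,T] → X₁` with `‖xₙ‖_{L^p(0,T;X₁)} + ‖xₙ‖_{BV^q(0,T;X₃)}` uniformly bounded has a
subsequence converging strongly in `L^p(0,T;X₂)`. -/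
theorem Mpq_compact_embedding
    {X₁ X₂ X₃ : Type*}
    [NormedAddCommGroup X₁] [NormedSpace ℝ X₁] [CompleteSpace X₁]
    [NormedAddCommGroup X₂] [NormedSpace ℝ X₂] [CompleteSpace X₂]
    [NormedAddCommGroup X₃] [NormedSpace ℝ X₃] [CompleteSpace X₃]
    (hX₁_refl : Function.Surjective (NormedSpace.inclusionInDoubleDual ℝ X₁))
    (e₁₂ : X₁ →L[ℝ] X₂) (he₁₂_inj : Function.Injective e₁₂)
    (he₁₂_cpt : MapsBoundedToRelCompact e₁₂)
    (e₂₃ : X₂ →L[ℝ] X₃) (he₂₃_inj : Function.Injective e₂₃)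
    (p q : ℝ) (hp : 1 ≤ p) (hq : 1 ≤ q)
    (T : ℝ) (hT : 0 < T)
    (x : ℕ → ℝ → X₁)
    (hx_mem : ∀ n, MemLp (x n) (ENNReal.ofReal p) (volume.restrict (Ioc (0 : ℝ) T)))
    (C : ℝ)
    (hx_Lp : ∀ n, eLpNorm (x n) (ENNReal.ofReal p) (volume.restrict (Ioc (0 : ℝ) T)) ≤
      ENNReal.ofReal C)
    (hx_BV : ∀ n, ∀ r ∈ bvPowSums q T (fun t => e₂₃ (e₁₂ (x n t))), r ≤ C ^ q) :
    ∃ φ : ℕ → ℕ, StrictMono φ ∧ ∃ y : ℝ → X₂,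
      Tendsto (fun k => eLpNorm (fun t => e₁₂ (x (φ k) t) - y t) (ENNReal.ofReal p)
        (volume.restrict (Ioc (0 : ℝ) T))) atTop (𝓝 0) := by
  classical
  have hp0 : 0 < p := lt_of_lt_of_le zero_lt_one hp
  have hq0 : 0 < q := lt_of_lt_of_le zero_lt_one hq
  set μT : Measure ℝ := volume.restrict (Ioc (0:ℝ) T) with hμT
  set p' : ℝ≥0∞ := ENNReal.ofReal p with hp'def
  have hp'1 : 1 ≤ p' := by
    rw [hp'def, ← ENNReal.ofReal_one]
    exact ENNReal.ofReal_le_ofReal hp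
  haveI hfact : Fact (1 ≤ p') := ⟨hp'1⟩
  have hp'ne : p' ≠ 0 := by
    rw [hp'def]
    simp [hp0]
  have hp'top : p' ≠ ∞ := ENNReal.ofReal_ne_top
  have hpR : p'.toReal = p := ENNReal.toReal_ofReal hp0.le
  set Cb : ℝ := |C| + 1 with hCbdef
  have hCb0 : 0 < Cb := by positivity
  have hLp : ∀ n, eLpNorm (x n) p' μT ≤ ENNReal.ofReal Cb := fun n =>
    (hx_Lp n).trans (ENNReal.ofReal_le_ofReal (by rw [hCbdef]; cases abs_cases C <;> linarith))
  have hBV : ∀ n, ∀ r ∈ bvPowSums q T (fun t => e₂₃ (e₁₂ (x n t))), r ≤ Cb ^ q := fun n r hr =>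
    (hx_BV n r hr).trans (mpq_aux_rpow_abs C q hq)
  have key : ∀ δ : ℝ, 0 < δ → ∃ N : ℕ, 0 < N ∧ ∃ (R : ℝ) (w : ℕ → ℕ → X₁),
      (∀ n j, j < N → ‖w n j‖ ≤ R) ∧
      ∀ n, eLpNorm (fun t => e₁₂ (x n t) - stepFn T N (fun j => e₁₂ (w n j)) t) p' μT ≤
        ENNReal.ofReal δ := by
    -- total L^p (lintegral) bound
    have hlint : ∀ n, ∫⁻ t, (‖x n t‖₊ : ℝ≥0∞) ^ p ∂μT ≤ ENNReal.ofReal Cb ^ p := by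
      intro n
      have h := hLp n
      rw [eLpNorm_eq_lintegral_rpow_enorm_toReal hp'ne hp'top, hpR] at h
      calc ∫⁻ t, (‖x n t‖₊ : ℝ≥0∞) ^ p ∂μT
          = ((∫⁻ t, (‖x n t‖₊ : ℝ≥0∞) ^ p ∂μT) ^ (1/p)) ^ p := by
            rw [← ENNReal.rpow_mul, one_div, inv_mul_cancel₀ hp0.ne', ENNReal.rpow_one]
        _ ≤ ENNReal.ofReal Cb ^ p := ENNReal.rpow_le_rpow h hp0.le
    -- single increment bound in X₃
    have hpair : ∀ n (s u : ℝ), 0 < s → s ≤ u → u ≤ T →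
        ‖e₂₃ (e₁₂ (x n u)) - e₂₃ (e₁₂ (x n s))‖ ≤ Cb := by
      intro n s u hs hsu huT
      rcases eq_or_lt_of_le hsu with rfl | hlt
      · simpa using hCb0.le
      · have hsum := pairs_bv hT (hBV n) 1 (fun _ => s) (fun _ => u)
          (fun _ _ => hs) (fun _ _ => hlt) (fun l hl => absurd hl (by omega)) (fun _ _ => huT)
        rw [Finset.sum_range_one] at hsum
        exact mpq_aux_real_le_of_rpow_le (norm_nonneg _) hCb0.le hq0 hsum
    intro δ hδ
    set κ : ℝ := (δ/2) ^ p / 3 with hκdef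
    have hκ0 : 0 < κ := by
      rw [hκdef]
      have : (0:ℝ) < (δ/2) ^ p := Real.rpow_pos_of_pos (by linarith) p
      linarith
    have h2p : (0:ℝ) < 2 ^ p := Real.rpow_pos_of_pos (by norm_num) p
    have hCbp : (0:ℝ) < Cb ^ p := Real.rpow_pos_of_pos hCb0 p
    set η : ℝ := min 1 (min (δ / (2 * Cb)) (κ / (2 ^ p * (2 * Cb ^ p + 1)))) with hηdef
    have hη0 : 0 < η := lt_min one_pos (lt_min (by positivity) (by positivity))
    have hη1 : η ≤ 1 := min_le_left _ _
    obtain ⟨Λ, hΛ1, hΛ⟩ := ehrling e₁₂ he₁₂_cpt e₂₃ he₂₃_inj η hη0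
    have hΛ0 : 0 < Λ := lt_of_lt_of_le one_pos hΛ1
    have hΛp : (0:ℝ) < Λ ^ p := Real.rpow_pos_of_pos hΛ0 p
    set ε : ℝ := min 1 (κ / (2 ^ p * Λ ^ p * T + 1)) with hεdef
    have hε0 : 0 < ε := lt_min one_pos (by positivity)
    have hε1 : ε ≤ 1 := min_le_left _ _
    have hεq : (0:ℝ) < ε ^ q := Real.rpow_pos_of_pos hε0 q
    have hCbq : (0:ℝ) < Cb ^ q := Real.rpow_pos_of_pos hCb0 q
    set W : ℝ := 2 ^ p * Λ ^ p * (Cb ^ q / ε ^ q) * T * Cb ^ p with hWdef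
    have hW0 : 0 ≤ W := by positivity
    set N : ℕ := ⌈W / κ⌉₊ + 1 with hNdef
    have hN : 0 < N := Nat.succ_pos _
    have hN' : (0:ℝ) < N := Nat.cast_pos.mpr hN
    set c : ℕ → ℝ := fun j => T * j / N with hcdef
    have hcap : ∀ j : ℕ, c j = T * j / N := fun j => by rw [hcdef]
    have hcI : ∀ j : ℕ, Ioc (c j) (c (j+1)) = Ioc (T * j / N) (T * (j+1) / N) := by
      intro j
      rw [hcap, hcap]
      congr 1
      push_cast
      ring
    have hcnonneg : ∀ j, 0 ≤ c j := fun j => by rw [hcap]; positivity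
    have hcmono : ∀ {i j : ℕ}, i ≤ j → c i ≤ c j := by
      intro i j hij
      have hij' : (i:ℝ) ≤ j := Nat.cast_le.mpr hij
      rw [hcap, hcap]
      gcongr
    have hcN : c N = T := by rw [hcap]; field_simp
    have hcsucc : ∀ j : ℕ, c j < c (j+1) := by
      intro j
      rw [hcap, hcap]
      rw [div_lt_div_iff₀ hN' hN']
      push_cast
      nlinarith [hN', hT]
    have hIsub : ∀ j, j < N → Ioc (c j) (c (j+1)) ⊆ Ioc 0 T := by
      intro j hj t ht
      exact ⟨lt_of_le_of_lt (hcnonneg j) ht.1,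
        ht.2.trans ((hcmono (Nat.succ_le_of_lt hj)).trans_eq hcN)⟩
    -- oscillations
    set Dset : ℕ → ℕ → Set ℝ := fun n j =>
      {d | ∃ s ∈ Ioc (c j) (c (j+1)), ∃ u ∈ Ioc (c j) (c (j+1)),
        d = ‖e₂₃ (e₁₂ (x n u)) - e₂₃ (e₁₂ (x n s))‖} with hDdef
    set ω : ℕ → ℕ → ℝ := fun n j => sSup (Dset n j) with hωdef
    have hDne : ∀ n j, (0:ℝ) ∈ Dset n j := by
      intro n j
      exact ⟨c (j+1), ⟨hcsucc j, le_rfl⟩, c (j+1), ⟨hcsucc j, le_rfl⟩, by simp⟩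
    have hDbdd : ∀ n j, j < N → ∀ d ∈ Dset n j, d ≤ Cb := by
      rintro n j hj d ⟨s, hs, u, hu, rfl⟩
      have hsIoc := hIsub j hj hs
      have huIoc := hIsub j hj hu
      rcases le_total s u with hsu | hus
      · exact hpair n s u hsIoc.1 hsu huIoc.2
      · rw [norm_sub_rev]; exact hpair n u s huIoc.1 hus hsIoc.2
    have hωub : ∀ n j, j < N → ω n j ≤ Cb := fun n j hj =>
      csSup_le ⟨0, hDne n j⟩ (hDbdd n j hj)
    have hωmem : ∀ n j, j < N → ∀ s ∈ Ioc (c j) (c (j+1)), ∀ u ∈ Ioc (c j) (c (j+1)),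
        ‖e₂₃ (e₁₂ (x n u)) - e₂₃ (e₁₂ (x n s))‖ ≤ ω n j := by
      intro n j hj s hs u hu
      exact le_csSup ⟨Cb, fun d hd => hDbdd n j hj d hd⟩ ⟨s, hs, u, hu, rfl⟩
    have hω0 : ∀ n j, j < N → 0 ≤ ω n j := fun n j hj =>
      le_csSup ⟨Cb, fun d hd => hDbdd n j hj d hd⟩ (hDne n j)
    -- counting lemma
    have hcount : ∀ n,
        (((Finset.range N).filter (fun j => ε < ω n j)).card : ℝ) * ε ^ q ≤ Cb ^ q := by
      intro n
      set J := (Finset.range N).filter (fun j => ε < ω n j) with hJdef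
      have hpairsJ : ∀ j ∈ J, ∃ s ∈ Ioc (c j) (c (j+1)), ∃ u ∈ Ioc (c j) (c (j+1)),
          s < u ∧ ε < ‖e₂₃ (e₁₂ (x n u)) - e₂₃ (e₁₂ (x n s))‖ := by
        intro j hj
        rw [hJdef, Finset.mem_filter] at hj
        obtain ⟨d, hd, hdε⟩ := exists_lt_of_lt_csSup ⟨0, hDne n j⟩ hj.2
        obtain ⟨s, hs, u, hu, rfl⟩ := hd
        rcases lt_trichotomy s u with hsu | rfl | hus
        · exact ⟨s, hs, u, hu, hsu, hdε⟩
        · exfalso; rw [sub_self, norm_zero] at hdε; linarith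
        · exact ⟨u, hu, s, hs, hus, by rwa [norm_sub_rev]⟩
      choose! sf hsf uf huf hsu hεlt using hpairsJ
      rcases Nat.eq_zero_or_pos J.card with hr0 | hr0
      · rw [hr0]
        simp only [Nat.cast_zero, zero_mul]
        positivity
      set e := J.orderEmbOfFin rfl with hedef
      have heJ : ∀ l : Fin J.card, e l ∈ J := fun l => J.orderEmbOfFin_mem rfl l
      have heN : ∀ l : Fin J.card, (e l : ℕ) < N := fun l =>
        Finset.mem_range.mp (Finset.mem_filter.mp (heJ l)).1
      set S : ℕ → ℝ := fun l => if h : l < J.card then sf (e ⟨l, h⟩) else 0 with hSdef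
      set U : ℕ → ℝ := fun l => if h : l < J.card then uf (e ⟨l, h⟩) else 0 with hUdef
      have hsum := pairs_bv hT (hBV n) J.card S U
        (fun l hl => by
          rw [hSdef]; simp only [dif_pos hl]
          exact lt_of_le_of_lt (hcnonneg _) (hsf _ (heJ ⟨l, hl⟩)).1)
        (fun l hl => by
          rw [hSdef, hUdef]; simp only [dif_pos hl]
          exact hsu _ (heJ ⟨l, hl⟩))
        (fun l hl => by
          have hl' : l < J.card := by omega
          rw [hSdef, hUdef]; simp only [dif_pos hl, dif_pos hl']
          have h1 : uf (e ⟨l, hl'⟩) ≤ c ((e ⟨l, hl'⟩ : ℕ) + 1) := (huf _ (heJ ⟨l, hl'⟩)).2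
          have h2 : ((e ⟨l, hl'⟩ : ℕ) + 1) ≤ (e ⟨l+1, hl⟩ : ℕ) := by
            have := e.strictMono (show (⟨l, hl'⟩ : Fin J.card) < ⟨l+1, hl⟩ from by
              simp [Fin.mk_lt_mk])
            omega
          have h3 : c ((e ⟨l, hl'⟩ : ℕ) + 1) ≤ c (e ⟨l+1, hl⟩ : ℕ) := hcmono h2
          exact lt_of_le_of_lt (h1.trans h3) (hsf _ (heJ ⟨l+1, hl⟩)).1)
        (fun l hl => by
          rw [hUdef]; simp only [dif_pos hl]
          have h1 : uf (e ⟨l, hl⟩) ≤ c ((e ⟨l, hl⟩ : ℕ) + 1) := (huf _ (heJ ⟨l, hl⟩)).2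
          exact h1.trans ((hcmono (Nat.succ_le_of_lt (heN ⟨l, hl⟩))).trans_eq hcN))
      have hlow : ∀ l ∈ Finset.range J.card,
          ε ^ q ≤ ‖(fun t => e₂₃ (e₁₂ (x n t))) (U l) - (fun t => e₂₃ (e₁₂ (x n t))) (S l)‖ ^ q := by
        intro l hl
        have hl' := Finset.mem_range.mp hl
        rw [hSdef, hUdef]
        simp only [dif_pos hl']
        exact (Real.rpow_lt_rpow hε0.le (hεlt _ (heJ ⟨l, hl'⟩)) hq0).le
      have hcard := Finset.card_nsmul_le_sum (Finset.range J.card) _ _ hlow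
      rw [Finset.card_range, nsmul_eq_mul] at hcard
      exact hcard.trans hsum
    -- selection of good points
    have hsel : ∀ n j, j < N → ∃ τ ∈ Ioc (c j) (c (j+1)),
        ENNReal.ofReal (T / N) * (‖x n τ‖₊ : ℝ≥0∞) ^ p ≤
          2 * (∫⁻ t in Ioc (c j) (c (j+1)), (‖x n t‖₊ : ℝ≥0∞) ^ p ∂μT) + (N : ℝ≥0∞)⁻¹ := by
      intro n j hj
      by_contra hcon
      push_neg at hcon
      set m := ∫⁻ t in Ioc (c j) (c (j+1)), (‖x n t‖₊ : ℝ≥0∞) ^ p ∂μT with hmdef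
      have hmfin : m ≠ ⊤ := by
        refine ne_of_lt (lt_of_le_of_lt ((setLIntegral_le_lintegral _ _).trans (hlint n)) ?_)
        exact ENNReal.rpow_lt_top_of_nonneg hp0.le ENNReal.ofReal_ne_top
      have hTN0 : ENNReal.ofReal (T/N) ≠ 0 := by
        rw [Ne, ENNReal.ofReal_eq_zero, not_le]
        positivity
      have hTNtop : ENNReal.ofReal (T/N) ≠ ⊤ := ENNReal.ofReal_ne_top
      have hμrestr : μT (Ioc (c j) (c (j+1))) = ENNReal.ofReal (T / N) := by
        rw [hμT, Measure.restrict_apply measurableSet_Ioc,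
          inter_eq_self_of_subset_left (hIsub j hj), Real.volume_Ioc]
        congr 1
        rw [hcap, hcap]
        push_cast
        field_simp
        ring
      set lam := (2 * m + (N:ℝ≥0∞)⁻¹) / ENNReal.ofReal (T/N) with hlamdef
      have hlow2 : ∀ t ∈ Ioc (c j) (c (j+1)), lam ≤ (‖x n t‖₊ : ℝ≥0∞) ^ p := by
        intro t ht
        rw [hlamdef, ENNReal.div_le_iff_le_mul (Or.inl hTN0) (Or.inl hTNtop)]
        exact le_trans (hcon t ht).le (le_of_eq (mul_comm _ _))
      have hge : lam * ENNReal.ofReal (T/N) ≤ m := by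
        have h1 : ∫⁻ _ in Ioc (c j) (c (j+1)), lam ∂μT ≤ m := by
          rw [hmdef]
          apply lintegral_mono_ae
          rw [ae_restrict_iff' measurableSet_Ioc]
          exact ae_of_all _ hlow2
        calc lam * ENNReal.ofReal (T/N) = ∫⁻ _ in Ioc (c j) (c (j+1)), lam ∂μT := by
              rw [setLIntegral_const, hμrestr]
          _ ≤ m := h1
      have hlt2 : m < lam * ENNReal.ofReal (T/N) := by
        rw [hlamdef, ENNReal.div_mul_cancel hTN0 hTNtop]
        have hNinv : (N:ℝ≥0∞)⁻¹ ≠ 0 := by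
          simp [ENNReal.inv_ne_zero]
        calc m < m + (m + (N:ℝ≥0∞)⁻¹) := by
              apply ENNReal.lt_add_right hmfin
              intro hzero
              rw [add_eq_zero] at hzero
              exact hNinv hzero.2
          _ = 2 * m + (N:ℝ≥0∞)⁻¹ := by ring
      exact absurd hge (not_le.mpr hlt2)
    choose! τ hτmem hτbnd using hsel
    -- bound on the selected values
    have hmj_le : ∀ n j, (∫⁻ t in Ioc (c j) (c (j+1)), (‖x n t‖₊ : ℝ≥0∞) ^ p ∂μT) ≤
        ENNReal.ofReal Cb ^ p := fun n j => (setLIntegral_le_lintegral _ _).trans (hlint n)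
    have hofRealCb : ENNReal.ofReal Cb ^ p = ENNReal.ofReal (Cb ^ p) :=
      ENNReal.ofReal_rpow_of_nonneg hCb0.le hp0.le
    set R : ℝ := ((2 * Cb ^ p + 1) * (N / T)) ^ (1/p) with hRdef
    have hwR : ∀ n j, j < N → ‖x n (τ n j)‖ ≤ R := by
      intro n j hj
      have h2 : ENNReal.ofReal (T/N) * (‖x n (τ n j)‖₊ : ℝ≥0∞) ^ p ≤
          ENNReal.ofReal (2 * Cb ^ p + 1) := by
        refine (hτbnd n j hj).trans ?_
        calc 2 * (∫⁻ t in Ioc (c j) (c (j+1)), (‖x n t‖₊ : ℝ≥0∞) ^ p ∂μT) + (N : ℝ≥0∞)⁻¹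
            ≤ 2 * ENNReal.ofReal (Cb ^ p) + 1 := by
              gcongr
              · rw [← hofRealCb]; exact hmj_le n j
              · exact ENNReal.inv_le_one.mpr (by exact_mod_cast hN)
          _ = ENNReal.ofReal (2 * Cb ^ p + 1) := by
              rw [ENNReal.ofReal_add (by positivity) zero_le_one, ENNReal.ofReal_one,
                ENNReal.ofReal_mul (by norm_num), ENNReal.ofReal_ofNat]
      have h3 : ENNReal.ofReal (T/N * ‖x n (τ n j)‖ ^ p) ≤ ENNReal.ofReal (2 * Cb ^ p + 1) := by
        rw [ENNReal.ofReal_mul (by positivity)]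
        rw [← ENNReal.ofReal_rpow_of_nonneg (norm_nonneg _) hp0.le, ofReal_norm]
        exact h2
      have h4 : T/N * ‖x n (τ n j)‖ ^ p ≤ 2 * Cb ^ p + 1 :=
        (ENNReal.ofReal_le_ofReal_iff (by positivity)).mp h3
      have h5 : ‖x n (τ n j)‖ ^ p ≤ (2 * Cb ^ p + 1) * (N / T) := by
        have hTN : (0:ℝ) < T / N := by positivity
        rw [mul_comm] at h4
        calc ‖x n (τ n j)‖ ^ p ≤ (2 * Cb ^ p + 1) / (T / N) := (le_div_iff₀ hTN).mpr h4
          _ = (2 * Cb ^ p + 1) * (N / T) := by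
              rw [div_div_eq_mul_div, mul_div_assoc]
      calc ‖x n (τ n j)‖ = (‖x n (τ n j)‖ ^ p) ^ (1/p) := by
            rw [one_div, Real.rpow_rpow_inv (norm_nonneg _) hp0.ne']
        _ ≤ R := by
            rw [hRdef]
            exact Real.rpow_le_rpow (by positivity) h5 (by positivity)
    refine ⟨N, hN, R, fun n j => x n (τ n j), hwR, ?_⟩
    intro n
    have hptwise : ∀ t ∈ Ioc (0:ℝ) T,
        ‖e₁₂ (x n t) - stepFn T N (fun j => e₁₂ (x n (τ n j))) t‖ ≤
          η * ‖x n t‖ + stepFn T N (fun j => η * ‖x n (τ n j)‖ + Λ * ω n j) t := by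
      intro t ht
      obtain ⟨j₀, hj₀, htj⟩ := exists_idx hT hN ht
      rw [stepFn_apply hT _ hj₀ htj, stepFn_apply hT _ hj₀ htj]
      have hτm := hτmem n j₀ hj₀
      have hehr := hΛ (x n t - x n (τ n j₀))
      simp only [map_sub] at hehr
      have hwω : ‖e₂₃ (e₁₂ (x n t)) - e₂₃ (e₁₂ (x n (τ n j₀)))‖ ≤ ω n j₀ :=
        hωmem n j₀ hj₀ (τ n j₀) hτm t (by rw [hcI]; exact htj)
      calc ‖e₁₂ (x n t) - e₁₂ (x n (τ n j₀))‖
          ≤ η * ‖x n t - x n (τ n j₀)‖ +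
            Λ * ‖e₂₃ (e₁₂ (x n t)) - e₂₃ (e₁₂ (x n (τ n j₀)))‖ := hehr
        _ ≤ η * (‖x n t‖ + ‖x n (τ n j₀)‖) + Λ * ω n j₀ :=
            add_le_add (mul_le_mul_of_nonneg_left (norm_sub_le _ _) hη0.le)
              (mul_le_mul_of_nonneg_left hwω hΛ0.le)
        _ = η * ‖x n t‖ + (η * ‖x n (τ n j₀)‖ + Λ * ω n j₀) := by ring
    have haesm_x : AEStronglyMeasurable (x n) μT := (hx_mem n).1
    have haesm1 : AEStronglyMeasurable (fun t => η * ‖x n t‖) μT := haesm_x.norm.const_mul η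
    have haesm2 : AEStronglyMeasurable
        (fun t => stepFn T N (fun j => η * ‖x n (τ n j)‖ + Λ * ω n j) t) μT :=
      (stepFn_sm T N _).aestronglyMeasurable
    have hmono : eLpNorm (fun t => e₁₂ (x n t) - stepFn T N (fun j => e₁₂ (x n (τ n j))) t) p' μT
        ≤ eLpNorm (fun t => η * ‖x n t‖ +
            stepFn T N (fun j => η * ‖x n (τ n j)‖ + Λ * ω n j) t) p' μT := by
      apply eLpNorm_mono_ae
      rw [hμT, ae_restrict_iff' measurableSet_Ioc]
      apply ae_of_all
      intro t ht
      exact ((hptwise t ht).trans (le_abs_self _)).trans_eq (Real.norm_eq_abs _).symm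
    have hterm1 : eLpNorm (fun t => η * ‖x n t‖) p' μT ≤ ENNReal.ofReal (δ/2) := by
      have h1 : (fun t => η * ‖x n t‖) = η • (fun t => ‖x n t‖) := rfl
      rw [h1, eLpNorm_const_smul, eLpNorm_norm]
      calc (‖η‖₊ : ℝ≥0∞) * eLpNorm (x n) p' μT ≤ ENNReal.ofReal η * ENNReal.ofReal Cb :=
            mul_le_mul' (le_of_eq (by
              rw [← enorm_eq_nnnorm, ← ofReal_norm, Real.norm_eq_abs, abs_of_pos hη0])) (hLp n)
        _ = ENNReal.ofReal (η * Cb) := (ENNReal.ofReal_mul hη0.le).symm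
        _ ≤ ENNReal.ofReal (δ/2) := ENNReal.ofReal_le_ofReal (by
            have hη2 : η ≤ δ / (2 * Cb) := le_trans (min_le_right _ _) (min_le_left _ _)
            rw [le_div_iff₀ (by positivity)] at hη2
            nlinarith [hCb0])
    have hofR2 : ENNReal.ofReal (2 * Cb ^ p + 1) = 2 * ENNReal.ofReal (Cb ^ p) + 1 := by
      rw [ENNReal.ofReal_add (by positivity) zero_le_one, ENNReal.ofReal_one,
        ENNReal.ofReal_mul (by norm_num), ENNReal.ofReal_ofNat]
    have h2pe : ((2:ℝ≥0∞)) ^ p = ENNReal.ofReal (2 ^ p) := by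
      rw [← ENNReal.ofReal_ofNat 2, ENNReal.ofReal_rpow_of_nonneg (by norm_num) hp0.le]
    have hterm2 : eLpNorm (fun t => stepFn T N (fun j => η * ‖x n (τ n j)‖ + Λ * ω n j) t) p' μT
        ≤ ENNReal.ofReal (δ/2) := by
      refine (stepFn_eLpNorm_le hp hT hN _).trans ?_
      have hpoint : ∀ j ∈ Finset.range N,
          ENNReal.ofReal (T/(N:ℝ)) * ENNReal.ofReal ‖η * ‖x n (τ n j)‖ + Λ * ω n j‖ ^ p ≤
            (2^p * ENNReal.ofReal η ^ p) *
              (ENNReal.ofReal (T/(N:ℝ)) * ENNReal.ofReal ‖x n (τ n j)‖ ^ p) +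
            (2^p * ENNReal.ofReal Λ ^ p) *
              (ENNReal.ofReal (T/(N:ℝ)) * ENNReal.ofReal (ω n j) ^ p) := by
        intro j hj
        have hjN := Finset.mem_range.mp hj
        have hω0j := hω0 n j hjN
        have hval : ‖η * ‖x n (τ n j)‖ + Λ * ω n j‖ = η * ‖x n (τ n j)‖ + Λ * ω n j := by
          rw [Real.norm_eq_abs, abs_of_nonneg (by positivity)]
        rw [hval, ENNReal.ofReal_add (by positivity) (by positivity)]
        calc ENNReal.ofReal (T/(N:ℝ)) *
              (ENNReal.ofReal (η * ‖x n (τ n j)‖) + ENNReal.ofReal (Λ * ω n j)) ^ p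
            ≤ ENNReal.ofReal (T/(N:ℝ)) * (2^p * (ENNReal.ofReal (η * ‖x n (τ n j)‖) ^ p +
                ENNReal.ofReal (Λ * ω n j) ^ p)) :=
              mul_le_mul_right (mpq_aux_ennreal_add_rpow _ _ hp0.le) _
          _ = _ := by
              rw [ENNReal.ofReal_mul hη0.le, ENNReal.ofReal_mul hΛ0.le,
                ENNReal.mul_rpow_of_nonneg _ _ hp0.le, ENNReal.mul_rpow_of_nonneg _ _ hp0.le]
              ring
      have hSm : ∑ j ∈ Finset.range N,
          (∫⁻ t in Ioc (c j) (c (j+1)), ((‖x n t‖₊ : ℝ≥0∞)) ^ p ∂μT) ≤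
            ENNReal.ofReal Cb ^ p := by
        have hdisj : (↑(Finset.range N) : Set ℕ).PairwiseDisjoint
            (fun j => Ioc (c j) (c (j+1))) := by
          intro a _ b _ hab
          apply Set.disjoint_left.mpr
          intro t hta htb
          simp only at hta htb
          rw [hcI] at hta htb
          exact hab (idx_unique hT hta htb)
        rw [← lintegral_biUnion_finset hdisj (fun j _ => measurableSet_Ioc)]
        exact (setLIntegral_le_lintegral _ _).trans (hlint n)
      have hSA : ∑ j ∈ Finset.range N,
          (ENNReal.ofReal (T/(N:ℝ)) * ENNReal.ofReal ‖x n (τ n j)‖ ^ p)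
          ≤ 2 * ENNReal.ofReal (Cb ^ p) + 1 := by
        calc ∑ j ∈ Finset.range N,
            (ENNReal.ofReal (T/(N:ℝ)) * ENNReal.ofReal ‖x n (τ n j)‖ ^ p)
            ≤ ∑ j ∈ Finset.range N, (2 * (∫⁻ t in Ioc (c j) (c (j+1)),
                ((‖x n t‖₊ : ℝ≥0∞)) ^ p ∂μT) + ((N:ℝ≥0∞))⁻¹) := by
              apply Finset.sum_le_sum
              intro j hj
              rw [ofReal_norm]
              exact hτbnd n j (Finset.mem_range.mp hj)
          _ = 2 * (∑ j ∈ Finset.range N, (∫⁻ t in Ioc (c j) (c (j+1)),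
                ((‖x n t‖₊ : ℝ≥0∞)) ^ p ∂μT)) + (N:ℝ≥0∞) * ((N:ℝ≥0∞))⁻¹ := by
              rw [Finset.sum_add_distrib, ← Finset.mul_sum, Finset.sum_const,
                Finset.card_range, nsmul_eq_mul]
          _ ≤ 2 * ENNReal.ofReal (Cb ^ p) + 1 := by
              gcongr
              · rw [← hofRealCb]; exact hSm
              · exact ENNReal.mul_inv_le_one _
      have hSB : ∑ j ∈ Finset.range N,
          (ENNReal.ofReal (T/(N:ℝ)) * ENNReal.ofReal (ω n j) ^ p)
          ≤ ENNReal.ofReal (Cb ^ q / ε ^ q) *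
              (ENNReal.ofReal (T/(N:ℝ)) * ENNReal.ofReal (Cb ^ p)) +
            ENNReal.ofReal T * ENNReal.ofReal (ε ^ p) := by
        rw [← Finset.sum_filter_add_sum_filter_not (Finset.range N) (fun j => ε < ω n j)]
        apply add_le_add
        · have hterm : ∀ j ∈ (Finset.range N).filter (fun j => ε < ω n j),
              ENNReal.ofReal (T/(N:ℝ)) * ENNReal.ofReal (ω n j) ^ p ≤
              ENNReal.ofReal (T/(N:ℝ)) * ENNReal.ofReal (Cb ^ p) := by
            intro j hj
            obtain ⟨hjN, _⟩ := Finset.mem_filter.mp hj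
            have hjN' := Finset.mem_range.mp hjN
            apply mul_le_mul_right
            rw [← ENNReal.ofReal_rpow_of_nonneg hCb0.le hp0.le]
            exact ENNReal.rpow_le_rpow (ENNReal.ofReal_le_ofReal (hωub n j hjN')) hp0.le
          refine (Finset.sum_le_card_nsmul _ _ _ hterm).trans ?_
          rw [nsmul_eq_mul]
          apply mul_le_mul_left
          have hcard : ((((Finset.range N).filter (fun j => ε < ω n j)).card : ℕ) : ℝ) ≤
              Cb ^ q / ε ^ q := by
            rw [le_div_iff₀ hεq]
            exact hcount n
          calc ((((Finset.range N).filter (fun j => ε < ω n j)).card : ℕ) : ℝ≥0∞)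
              = ENNReal.ofReal (((Finset.range N).filter (fun j => ε < ω n j)).card : ℝ) := by
                rw [ENNReal.ofReal_natCast]
            _ ≤ ENNReal.ofReal (Cb ^ q / ε ^ q) := ENNReal.ofReal_le_ofReal hcard
        · have hterm : ∀ j ∈ (Finset.range N).filter (fun j => ¬ ε < ω n j),
              ENNReal.ofReal (T/(N:ℝ)) * ENNReal.ofReal (ω n j) ^ p ≤
              ENNReal.ofReal (T/(N:ℝ)) * ENNReal.ofReal (ε ^ p) := by
            intro j hj
            obtain ⟨hjN, hjε⟩ := Finset.mem_filter.mp hj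
            apply mul_le_mul_right
            rw [← ENNReal.ofReal_rpow_of_nonneg hε0.le hp0.le]
            exact ENNReal.rpow_le_rpow (ENNReal.ofReal_le_ofReal (not_lt.mp hjε)) hp0.le
          refine (Finset.sum_le_card_nsmul _ _ _ hterm).trans ?_
          rw [nsmul_eq_mul]
          calc ((((Finset.range N).filter (fun j => ¬ ε < ω n j)).card : ℕ) : ℝ≥0∞) *
                (ENNReal.ofReal (T/(N:ℝ)) * ENNReal.ofReal (ε ^ p))
              ≤ (N : ℝ≥0∞) * (ENNReal.ofReal (T/(N:ℝ)) * ENNReal.ofReal (ε ^ p)) := by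
                gcongr
                have hcard2 : ((Finset.range N).filter (fun j => ¬ ε < ω n j)).card ≤ N :=
                  le_trans (Finset.card_filter_le _ _) (le_of_eq (Finset.card_range N))
                exact_mod_cast hcard2
            _ = ENNReal.ofReal T * ENNReal.ofReal (ε ^ p) := by
                rw [← mul_assoc]
                congr 1
                rw [← ENNReal.ofReal_natCast N, ← ENNReal.ofReal_mul (by positivity)]
                congr 1
                field_simp
      have hS1 : 2 ^ p * η ^ p * (2 * Cb ^ p + 1) ≤ κ := by
        have hη3 : η ≤ κ / (2 ^ p * (2 * Cb ^ p + 1)) :=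
          le_trans (min_le_right _ _) (min_le_right _ _)
        have hηp : η ^ p ≤ η := by
          have h := Real.rpow_le_rpow_of_exponent_ge hη0 hη1 hp
          rwa [Real.rpow_one] at h
        rw [le_div_iff₀ (by positivity)] at hη3
        calc 2 ^ p * η ^ p * (2 * Cb ^ p + 1) ≤ 2 ^ p * η * (2 * Cb ^ p + 1) := by gcongr
          _ ≤ κ := by nlinarith
      have hS2 : 2 ^ p * Λ ^ p * ((Cb ^ q / ε ^ q) * ((T/(N:ℝ)) * Cb ^ p)) ≤ κ := by
        have hNW : W / κ ≤ (N:ℝ) := by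
          rw [hNdef]
          push_cast
          linarith [Nat.le_ceil (W/κ)]
        have hWN : W ≤ κ * N := by
          rw [div_le_iff₀ hκ0] at hNW
          linarith
        have hexp : 2 ^ p * Λ ^ p * ((Cb ^ q / ε ^ q) * ((T/(N:ℝ)) * Cb ^ p)) = W / N := by
          rw [hWdef]; ring
        rw [hexp, div_le_iff₀ hN']
        linarith
      have hS3 : 2 ^ p * Λ ^ p * (T * ε ^ p) ≤ κ := by
        have hε2 : ε ≤ κ / (2 ^ p * Λ ^ p * T + 1) := min_le_right _ _
        have hεp : ε ^ p ≤ ε := by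
          have h := Real.rpow_le_rpow_of_exponent_ge hε0 hε1 hp
          rwa [Real.rpow_one] at h
        rw [le_div_iff₀ (by positivity)] at hε2
        calc 2 ^ p * Λ ^ p * (T * ε ^ p) ≤ 2 ^ p * Λ ^ p * (T * ε) := by gcongr
          _ ≤ κ := by nlinarith [hε0.le]
      have hpiece1 : (2^p * ENNReal.ofReal η ^ p) * (2 * ENNReal.ofReal (Cb ^ p) + 1) ≤
          ENNReal.ofReal κ := by
        rw [← hofR2, h2pe, ENNReal.ofReal_rpow_of_nonneg hη0.le hp0.le,
          ← ENNReal.ofReal_mul (by positivity), ← ENNReal.ofReal_mul (by positivity)]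
        exact ENNReal.ofReal_le_ofReal hS1
      have hpiece2 : (2^p * ENNReal.ofReal Λ ^ p) * (ENNReal.ofReal (Cb ^ q / ε ^ q) *
          (ENNReal.ofReal (T/(N:ℝ)) * ENNReal.ofReal (Cb ^ p))) ≤ ENNReal.ofReal κ := by
        rw [h2pe, ENNReal.ofReal_rpow_of_nonneg hΛ0.le hp0.le,
          ← ENNReal.ofReal_mul (by positivity), ← ENNReal.ofReal_mul (by positivity),
          ← ENNReal.ofReal_mul (by positivity), ← ENNReal.ofReal_mul (by positivity)]
        exact ENNReal.ofReal_le_ofReal hS2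
      have hpiece3 : (2^p * ENNReal.ofReal Λ ^ p) *
          (ENNReal.ofReal T * ENNReal.ofReal (ε ^ p)) ≤ ENNReal.ofReal κ := by
        rw [h2pe, ENNReal.ofReal_rpow_of_nonneg hΛ0.le hp0.le,
          ← ENNReal.ofReal_mul (by positivity), ← ENNReal.ofReal_mul (by positivity),
          ← ENNReal.ofReal_mul (by positivity)]
        exact ENNReal.ofReal_le_ofReal hS3
      have hsum1 := Finset.sum_le_sum hpoint
      have hsplit : (∑ j ∈ Finset.range N, ((2^p * ENNReal.ofReal η ^ p) *
            (ENNReal.ofReal (T/(N:ℝ)) * ENNReal.ofReal ‖x n (τ n j)‖ ^ p) +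
          (2^p * ENNReal.ofReal Λ ^ p) *
            (ENNReal.ofReal (T/(N:ℝ)) * ENNReal.ofReal (ω n j) ^ p)))
          = (2^p * ENNReal.ofReal η ^ p) * (∑ j ∈ Finset.range N,
              (ENNReal.ofReal (T/(N:ℝ)) * ENNReal.ofReal ‖x n (τ n j)‖ ^ p)) +
            (2^p * ENNReal.ofReal Λ ^ p) * (∑ j ∈ Finset.range N,
              (ENNReal.ofReal (T/(N:ℝ)) * ENNReal.ofReal (ω n j) ^ p)) := by
        rw [Finset.sum_add_distrib, Finset.mul_sum, Finset.mul_sum]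
      have htotal : (∑ j ∈ Finset.range N,
          ENNReal.ofReal (T/(N:ℝ)) * ENNReal.ofReal ‖η * ‖x n (τ n j)‖ + Λ * ω n j‖ ^ p)
          ≤ ENNReal.ofReal ((δ/2) ^ p) := by
        refine (hsum1.trans_eq hsplit).trans ?_
        calc (2^p * ENNReal.ofReal η ^ p) * (∑ j ∈ Finset.range N,
              (ENNReal.ofReal (T/(N:ℝ)) * ENNReal.ofReal ‖x n (τ n j)‖ ^ p)) +
            (2^p * ENNReal.ofReal Λ ^ p) * (∑ j ∈ Finset.range N,
              (ENNReal.ofReal (T/(N:ℝ)) * ENNReal.ofReal (ω n j) ^ p))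
            ≤ (2^p * ENNReal.ofReal η ^ p) * (2 * ENNReal.ofReal (Cb ^ p) + 1) +
              (2^p * ENNReal.ofReal Λ ^ p) *
                (ENNReal.ofReal (Cb ^ q / ε ^ q) *
                  (ENNReal.ofReal (T/(N:ℝ)) * ENNReal.ofReal (Cb ^ p)) +
                 ENNReal.ofReal T * ENNReal.ofReal (ε ^ p)) :=
              add_le_add (mul_le_mul_right hSA _) (mul_le_mul_right hSB _)
          _ ≤ ENNReal.ofReal κ + (ENNReal.ofReal κ + ENNReal.ofReal κ) := by
              rw [mul_add (2^p * ENNReal.ofReal Λ ^ p)]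
              exact add_le_add hpiece1 (add_le_add hpiece2 hpiece3)
          _ = ENNReal.ofReal (κ + (κ + κ)) := by
              rw [ENNReal.ofReal_add hκ0.le (by positivity),
                ENNReal.ofReal_add hκ0.le hκ0.le]
          _ = ENNReal.ofReal ((δ/2) ^ p) := by
              congr 1
              rw [hκdef]
              ring
      refine (ENNReal.rpow_le_rpow htotal (by positivity)).trans ?_
      rw [ENNReal.ofReal_rpow_of_nonneg (by positivity) (by positivity)]
      apply le_of_eq
      congr 1
      rw [one_div, Real.rpow_rpow_inv (by linarith) hp0.ne']
    refine hmono.trans ?_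
    have hfg : (fun t => η * ‖x n t‖ +
        stepFn T N (fun j => η * ‖x n (τ n j)‖ + Λ * ω n j) t) =
        (fun t => η * ‖x n t‖) +
        (fun t => stepFn T N (fun j => η * ‖x n (τ n j)‖ + Λ * ω n j) t) := rfl
    rw [hfg]
    refine (eLpNorm_add_le haesm1 haesm2 hp'1).trans ?_
    refine (add_le_add hterm1 hterm2).trans ?_
    rw [← ENNReal.ofReal_add (by linarith) (by linarith)]
    apply le_of_eq
    congr 1
    ring

  have hgmem : ∀ n, MemLp (fun t => e₁₂ (x n t)) p' μT := fun n => e₁₂.comp_memLp' (hx_mem n)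
  set G : ℕ → Lp X₂ p' μT := fun n => (hgmem n).toLp _ with hGdef
  have htb : TotallyBounded (Set.range G) := by
    rw [Metric.totallyBounded_iff]
    intro ε' hε'
    obtain ⟨N, hN, R, w, hwR, hest⟩ := key (ε'/3) (by linarith)
    set K : Set X₂ := closure (e₁₂ '' Metric.closedBall 0 R) with hKdef
    have hKcpt : IsCompact K := he₁₂_cpt _ Metric.isBounded_closedBall
    have hKN : IsCompact (Set.univ.pi (fun _ : Fin N => K)) := isCompact_univ_pi fun _ => hKcpt
    set vext : (Fin N → X₂) → (ℕ → X₂) := fun v j => if h : j < N then v ⟨j, h⟩ else 0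
      with hvextdef
    have hstep : ∀ v : Fin N → X₂, MemLp (stepFn T N (vext v)) p' μT := fun v =>
      stepFn_memℒp hp hT hN _
    set Φ : (Fin N → X₂) → Lp X₂ p' μT := fun v => (hstep v).toLp _ with hΦdef
    have hΦlip : LipschitzWith (Real.toNNReal (max 1 T)) Φ := by
      apply LipschitzWith.of_dist_le_mul
      intro v v'
      rw [dist_eq_norm, Lp.norm_def]
      have hae : ⇑(Φ v - Φ v') =ᵐ[μT] stepFn T N (fun j => vext v j - vext v' j) := by
        filter_upwards [Lp.coeFn_sub (Φ v) (Φ v'), (hstep v).coeFn_toLp,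
          (hstep v').coeFn_toLp] with t h1 h2 h3
        rw [h1, Pi.sub_apply, h2, h3, stepFn_sub]
      rw [eLpNorm_congr_ae hae]
      have hd0 : 0 ≤ dist v v' := dist_nonneg
      have hb := stepFn_eLpNorm_le hp hT hN (fun j => vext v j - vext v' j)
        (E := X₂)
      have hchain : eLpNorm (stepFn T N (fun j => vext v j - vext v' j)) p' μT ≤
          ENNReal.ofReal (max 1 T * dist v v') := by
        refine hb.trans ?_
        have hsum : (∑ j ∈ Finset.range N,
            ENNReal.ofReal (T / N) * ENNReal.ofReal ‖vext v j - vext v' j‖ ^ p) ≤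
            (N : ℝ≥0∞) * (ENNReal.ofReal (T / N) * ENNReal.ofReal (dist v v') ^ p) := by
          have hsle := Finset.sum_le_card_nsmul (Finset.range N)
            (fun j => ENNReal.ofReal (T / N) * ENNReal.ofReal ‖vext v j - vext v' j‖ ^ p)
            (ENNReal.ofReal (T / N) * ENNReal.ofReal (dist v v') ^ p) (fun j hj => by
              have hjN := Finset.mem_range.mp hj
              have hle : ‖vext v j - vext v' j‖ ≤ dist v v' := by
                calc ‖vext v j - vext v' j‖ = dist (v ⟨j, hjN⟩) (v' ⟨j, hjN⟩) := by
                      simp only [hvextdef, dif_pos hjN, dist_eq_norm]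
                  _ ≤ dist v v' := dist_le_pi_dist v v' _
              exact mul_le_mul_right
                (ENNReal.rpow_le_rpow (ENNReal.ofReal_le_ofReal hle) hp0.le) _)
          simpa [Finset.card_range, nsmul_eq_mul] using hsle
        refine (ENNReal.rpow_le_rpow hsum (by positivity)).trans ?_
        have hN' : (0:ℝ) < N := Nat.cast_pos.mpr hN
        have hNcast : (N : ℝ≥0∞) = ENNReal.ofReal (N : ℝ) := by
          rw [ENNReal.ofReal_natCast]
        have hend : (N : ℝ≥0∞) * (ENNReal.ofReal (T / N) * ENNReal.ofReal (dist v v') ^ p)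
            = ENNReal.ofReal (T * dist v v' ^ p) := by
          rw [hNcast, ← mul_assoc, ← ENNReal.ofReal_mul (by positivity),
            ENNReal.ofReal_rpow_of_nonneg hd0 hp0.le, ← ENNReal.ofReal_mul (by positivity)]
          congr 1
          field_simp
        rw [hend, ENNReal.ofReal_rpow_of_nonneg (by positivity) (by positivity)]
        apply ENNReal.ofReal_le_ofReal
        have he2 : (T * dist v v' ^ p) ^ (1/p) = T ^ (1/p) * dist v v' := by
          rw [Real.mul_rpow hT.le (by positivity), one_div,
            Real.rpow_rpow_inv hd0 hp0.ne']
        rw [he2]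
        apply mul_le_mul_of_nonneg_right _ hd0
        rcases le_total T 1 with hT1 | hT1
        · exact (Real.rpow_le_one hT.le hT1 (by positivity)).trans (le_max_left _ _)
        · exact (Real.rpow_le_rpow_of_exponent_le hT1 (by
            rw [div_le_one hp0]; linarith)).trans_eq (Real.rpow_one T) |>.trans (le_max_right _ _)
      calc (eLpNorm (stepFn T N (fun j => vext v j - vext v' j)) p' μT).toReal
          ≤ (ENNReal.ofReal (max 1 T * dist v v')).toReal :=
            ENNReal.toReal_mono ENNReal.ofReal_ne_top hchain
        _ = max 1 T * dist v v' := ENNReal.toReal_ofReal (by positivity)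
        _ = (Real.toNNReal (max 1 T) : ℝ) * dist v v' := by
            rw [Real.coe_toNNReal _ (by positivity)]
    have hcpt2 : IsCompact (Φ '' (Set.univ.pi (fun _ : Fin N => K))) :=
      hKN.image hΦlip.continuous
    obtain ⟨F, hFfin, hFcov⟩ := Metric.totallyBounded_iff.mp hcpt2.totallyBounded (ε'/3)
      (by linarith)
    refine ⟨F, hFfin, ?_⟩
    rintro _ ⟨n, rfl⟩
    set v0 : Fin N → X₂ := fun j => e₁₂ (w n j.1) with hv0def
    have hv0mem : v0 ∈ Set.univ.pi (fun _ : Fin N => K) := by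
      intro j _
      exact subset_closure ⟨w n j.1, mem_closedBall_zero_iff.mpr (hwR n j.1 j.2), rfl⟩
    have hPF : Φ v0 ∈ ⋃ y ∈ F, Metric.ball y (ε'/3) := hFcov ⟨v0, hv0mem, rfl⟩
    simp only [Set.mem_iUnion, exists_prop] at hPF
    obtain ⟨y, hyF, hy⟩ := hPF
    simp only [Set.mem_iUnion, exists_prop]
    refine ⟨y, hyF, ?_⟩
    have hdist : dist (G n) (Φ v0) ≤ ε'/3 := by
      rw [dist_eq_norm, Lp.norm_def]
      have hae : ⇑(G n - Φ v0) =ᵐ[μT]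
          (fun t => e₁₂ (x n t) - stepFn T N (fun j => e₁₂ (w n j)) t) := by
        have hsame : stepFn T N (vext v0) = stepFn T N (fun j => e₁₂ (w n j)) := by
          funext t
          rw [stepFn, stepFn]
          apply Finset.sum_congr rfl
          intro j hj
          have hjN := Finset.mem_range.mp hj
          simp only [hvextdef, hv0def, dif_pos hjN]
        filter_upwards [Lp.coeFn_sub (G n) (Φ v0), (hgmem n).coeFn_toLp,
          (hstep v0).coeFn_toLp] with t h1 h2 h3
        rw [h1, Pi.sub_apply, h2, h3, hsame]
      rw [eLpNorm_congr_ae hae]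
      calc (eLpNorm _ p' μT).toReal ≤ (ENNReal.ofReal (ε'/3)).toReal :=
            ENNReal.toReal_mono ENNReal.ofReal_ne_top (hest n)
        _ ≤ ε'/3 := le_of_eq (ENNReal.toReal_ofReal (by linarith))
    have : dist (G n) y < ε'/3 + ε'/3 :=
      lt_of_le_of_lt (dist_triangle (G n) (Φ v0) y)
        (add_lt_add_of_le_of_lt hdist (Metric.mem_ball.mp hy))
    rw [Metric.mem_ball]
    linarith
  obtain ⟨Y, -, φ, hφ, hYlim⟩ :=
    (TotallyBounded.isCompact_of_isClosed htb.closure isClosed_closure).tendsto_subseq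
      (x := G) (fun n => subset_closure (Set.mem_range_self n))
  refine ⟨φ, hφ, fun t => Y t, ?_⟩
  have hnorm : ∀ k, eLpNorm (fun t => e₁₂ (x (φ k) t) - Y t) p' μT
      = ENNReal.ofReal ‖G (φ k) - Y‖ := by
    intro k
    have h1 : (fun t => e₁₂ (x (φ k) t) - Y t) =ᵐ[μT] ⇑(G (φ k) - Y) := by
      filter_upwards [Lp.coeFn_sub (G (φ k)) Y, (hgmem (φ k)).coeFn_toLp] with t h2 h3
      rw [h2, Pi.sub_apply, h3]
    rw [eLpNorm_congr_ae h1, Lp.norm_def, ENNReal.ofReal_toReal (Lp.eLpNorm_ne_top _)]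
  have hT0 : Tendsto (fun k => ‖G (φ k) - Y‖) atTop (𝓝 0) := by
    have h := tendsto_iff_norm_sub_tendsto_zero.mp hYlim
    simpa [Function.comp] using h
  have hfin : Tendsto (fun k => ENNReal.ofReal ‖G (φ k) - Y‖) atTop (𝓝 0) := by
    have h := (ENNReal.continuous_ofReal.tendsto 0).comp hT0
    simpa [Function.comp_def] using h
  exact Tendsto.congr (fun k => (hnorm k).symm) hfin
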